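/- Define G : Z⟨a,b⟩ → Z⟨a,b⟩ by G(w) = φ(w)·b + Σ φ(w_(1))·b·λ̄(w_(2))·(a−b). Then for any ab-polynomial w, G(w·a) = (1/2)·φ(w·ab). -/

import Mathlib

open scoped TensorProduct
open scoped Classical

noncomputable section

abbrev Alg : Type := MonoidAlgebra ℤ (FreeMonoid Bool)

def va : Alg := MonoidAlgebra.of ℤ (FreeMonoid Bool) (FreeMonoid.of false)
def vb : Alg := MonoidAlgebra.of ℤ (FreeMonoid Bool) (FreeMonoid.of true)

def monoOf (l : List Bool) : Alg := MonoidAlgebra.of ℤ (FreeMonoid Bool) (FreeMonoid.ofList l)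

def toF (x : Alg) : FreeMonoid Bool →₀ ℤ := x.coeff

/-- The weight of a chain encoded as a strictly increasing map `f : Fin (k+1) → P`. -/
def wtChain {P : Type} (ρ : P → ℕ) {k : ℕ} (f : Fin (k+1) → P) : Alg :=
  (List.ofFn (fun i : Fin k =>
    (va - vb) ^ (ρ (f i.succ) - ρ (f i.castSucc) - 1) *
      (if (i : ℕ) + 1 < k then vb else 1))).prod

def zetaChain {P : Type} (zb : P → P → ℤ) {k : ℕ} (f : Fin (k+1) → P) : ℤ :=
  ∏ i : Fin k, zb (f i.castSucc) (f i.succ)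

/-- The ab-index of the interval `[lo, hi]` of a quasi-graded poset `(P, ρ, zb)`. -/
def PsiI {P : Type} [Fintype P] [PartialOrder P] (ρ : P → ℕ) (zb : P → P → ℤ)
    (lo hi : P) : Alg :=
  ∑ k ∈ Finset.range (Fintype.card P + 1),
    ∑ f : Fin (k+1) → P,
      if StrictMono f ∧ f 0 = lo ∧ f (Fin.last k) = hi
      then zetaChain zb f • wtChain ρ f else 0

/-- The algebra map `κ` with `κ(a) = a - b`, `κ(b) = 0`. -/
def kappa : Alg →ₐ[ℤ] Alg :=
  MonoidAlgebra.lift ℤ Alg (FreeMonoid Bool)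
    (FreeMonoid.lift (fun s => if s then 0 else va - vb))

/-- The algebra map `λ̄` with `λ̄(a) = 0`, `λ̄(b) = a - b`. -/
def lambdabar : Alg →ₐ[ℤ] Alg :=
  MonoidAlgebra.lift ℤ Alg (FreeMonoid Bool)
    (FreeMonoid.lift (fun s => if s then va - vb else 0))

/-- `η` on monomials: `b^m a^k ↦ 2 (a-b)^(m+k)`, other monomials to `0`. -/
def etaMon (w : FreeMonoid Bool) : Alg :=
  if ∃ m k : ℕ, FreeMonoid.toList w = List.replicate m true ++ List.replicate k false
  then (2 : ℤ) • (va - vb) ^ (FreeMonoid.toList w).length else 0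

def etaOp (x : Alg) : Alg := (toF x).sum fun w c => c • etaMon w

/-- The letter-deletion coproduct on `Z⟨a,b⟩`. -/
def Delta (x : Alg) : Alg ⊗[ℤ] Alg :=
  (toF x).sum fun w c => c •
    ∑ i ∈ Finset.range (FreeMonoid.toList w).length,
      monoOf ((FreeMonoid.toList w).take i) ⊗ₜ[ℤ] monoOf ((FreeMonoid.toList w).drop (i+1))

/-- The Sweedler-style convolution `x ↦ Σ F(x₍₁₎) · b · G(x₍₂₎)`. -/
def sweedler (F G : Alg → Alg) (x : Alg) : Alg :=
  (toF x).sum fun w c => c •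
    ∑ i ∈ Finset.range (FreeMonoid.toList w).length,
      F (monoOf ((FreeMonoid.toList w).take i)) * vb *
        G (monoOf ((FreeMonoid.toList w).drop (i+1)))

/-- `phiAux n = φ_{n+1}`, defined by `φ₁ = κ` and `φ_{k+1}(w) = Σ φ_k(w₍₁₎) · b · η(w₍₂₎)`. -/
def phiAux : ℕ → Alg → Alg
  | 0 => fun x => kappa x
  | (n+1) => fun x => sweedler (phiAux n) etaOp x

def maxLen (x : Alg) : ℕ := (toF x).support.sup fun w => (FreeMonoid.toList w).length

/-- The operator `φ = Σ_{k ≥ 1} φ_k` (the sum is finite on any given polynomial). -/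
def phi (x : Alg) : Alg := ∑ k ∈ Finset.range (maxLen x + 1), phiAux k x

/-- `ω` on a monomial: replace each occurrence of `ab` by `2d` and remaining letters by `c`. -/
def omegaList : List Bool → Alg
  | [] => 1
  | false :: true :: rest => ((2:ℤ) • (va * vb + vb * va)) * omegaList rest
  | _ :: rest => (va + vb) * omegaList rest

def omegaOp (x : Alg) : Alg := (toF x).sum fun w c => c • omegaList (FreeMonoid.toList w)

/-- The operator `G(w) = φ(w)·b + Σ φ(w₍₁₎)·b·λ̄(w₍₂₎)·(a-b)`. -/
def Gop (w : Alg) : Alg := phi w * vb + sweedler phi (fun y => lambdabar y) w * (va - vb)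

/-- The reversal map `u ↦ u*` reading each monomial backwards. -/
def revOp (x : Alg) : Alg :=
  (toF x).sum fun w c =>
    MonoidAlgebra.single (FreeMonoid.ofList (FreeMonoid.toList w).reverse) c

/-- `H'` deletes the last letter of each monomial, `H'(1) = 0`. -/
def Hp (x : Alg) : Alg :=
  (toF x).sum fun w c => if w = 1 then 0 else c • monoOf ((FreeMonoid.toList w).dropLast)


/-! ### Auxiliary lemmas for `G_mul_a` -/

section AuxG

lemma aux_monoOf_single (l : List Bool) :
    toF (monoOf l) = Finsupp.single (FreeMonoid.ofList l) (1:ℤ) := by rfl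

lemma aux_monoOf_append (l₁ l₂ : List Bool) :
    monoOf (l₁ ++ l₂) = monoOf l₁ * monoOf l₂ := by
  unfold monoOf
  rw [show FreeMonoid.ofList (l₁ ++ l₂) =
      FreeMonoid.ofList l₁ * FreeMonoid.ofList l₂ from rfl, map_mul]

lemma aux_va_eq : va = monoOf [false] := rfl
lemma aux_vb_eq : vb = monoOf [true] := rfl
lemma aux_monoOf_nil : monoOf [] = 1 := rfl

/-- values of the algebra maps on generators -/
lemma aux_kappa_vb : kappa vb = 0 := by
  unfold kappa vb
  rw [MonoidAlgebra.of_apply, MonoidAlgebra.lift_single, FreeMonoid.lift_eval_of]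
  simp

lemma aux_lambdabar_va : lambdabar va = 0 := by
  unfold lambdabar va
  rw [MonoidAlgebra.of_apply, MonoidAlgebra.lift_single, FreeMonoid.lift_eval_of]
  simp

lemma aux_kappa_endb (u : List Bool) : kappa (monoOf (u ++ [true])) = 0 := by
  rw [aux_monoOf_append, map_mul, ← aux_vb_eq, aux_kappa_vb, mul_zero]

lemma aux_lambdabar_enda (u : List Bool) : lambdabar (monoOf (u ++ [false])) = 0 := by
  rw [aux_monoOf_append, map_mul, ← aux_va_eq, aux_lambdabar_va, mul_zero]

/-- the summand of `sweedler` -/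
def sweedT (F G : Alg → Alg) (w : FreeMonoid Bool) : Alg :=
  ∑ i ∈ Finset.range (FreeMonoid.toList w).length,
    F (monoOf ((FreeMonoid.toList w).take i)) * vb *
      G (monoOf ((FreeMonoid.toList w).drop (i+1)))

lemma aux_sweedler_eq (F G : Alg → Alg) (x : Alg) :
    sweedler F G x = Finsupp.linearCombination ℤ (sweedT F G) (toF x) := by
  rw [Finsupp.linearCombination_apply]; rfl

lemma aux_sweedler_add (F G : Alg → Alg) (x y : Alg) :
    sweedler F G (x + y) = sweedler F G x + sweedler F G y := by
  rw [aux_sweedler_eq, aux_sweedler_eq, aux_sweedler_eq,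
    show toF (x + y) = toF x + toF y from MonoidAlgebra.coeff_add x y, map_add]

lemma aux_sweedler_smul (F G : Alg → Alg) (c : ℤ) (x : Alg) :
    sweedler F G (c • x) = c • sweedler F G x := by
  rw [aux_sweedler_eq, aux_sweedler_eq,
    show toF (c • x) = c • toF x from MonoidAlgebra.coeff_smul c x, map_smul]

lemma aux_sweedler_monoOf (F G : Alg → Alg) (l : List Bool) :
    sweedler F G (monoOf l) =
      ∑ i ∈ Finset.range l.length,
        F (monoOf (l.take i)) * vb * G (monoOf (l.drop (i+1))) := by
  rw [aux_sweedler_eq, aux_monoOf_single, Finsupp.linearCombination_single, one_smul,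
    sweedT]
  simp [FreeMonoid.toList_ofList]

lemma aux_etaOp_monoOf (l : List Bool) :
    etaOp (monoOf l) = etaMon (FreeMonoid.ofList l) := by
  unfold etaOp
  rw [aux_monoOf_single, Finsupp.sum_single_index (by simp), one_smul]

lemma aux_etaMon_nil : etaMon (FreeMonoid.ofList []) = (2:ℤ) • (1 : Alg) := by
  unfold etaMon
  rw [FreeMonoid.toList_ofList, if_pos ⟨0, 0, rfl⟩]
  simp

lemma aux_etaMon_b : etaMon (FreeMonoid.ofList [true]) = (2:ℤ) • (va - vb) := by
  unfold etaMon
  rw [FreeMonoid.toList_ofList, if_pos ⟨1, 0, rfl⟩]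
  simp

lemma aux_etaMon_bad (u : List Bool) :
    etaMon (FreeMonoid.ofList (u ++ [false, true])) = 0 := by
  unfold etaMon
  rw [FreeMonoid.toList_ofList, if_neg]
  rintro ⟨m, k, h⟩
  cases k with
  | zero =>
    rw [List.replicate_zero, List.append_nil] at h
    have hf : false ∈ List.replicate m true := by
      rw [← h]; simp
    simpa using List.eq_of_mem_replicate hf
  | succ k =>
    have h2 := congrArg List.getLast? h
    rw [show u ++ [false, true] = (u ++ [false]) ++ [true] by simp,
      List.getLast?_concat] at h2
    rw [List.replicate_succ' (n := k) (a := false), ← List.append_assoc, List.getLast?_concat] at h2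
    simp at h2

lemma aux_phiAux_add (n : ℕ) (x y : Alg) :
    phiAux n (x + y) = phiAux n x + phiAux n y := by
  cases n with
  | zero => exact map_add kappa x y
  | succ n => exact aux_sweedler_add _ _ x y

lemma aux_phiAux_smul (n : ℕ) (c : ℤ) (x : Alg) :
    phiAux n (c • x) = c • phiAux n x := by
  cases n with
  | zero => exact map_zsmul kappa c x
  | succ n => exact aux_sweedler_smul _ _ c x

def phiAuxL (n : ℕ) : Alg →ₗ[ℤ] Alg where
  toFun := phiAux n
  map_add' := aux_phiAux_add n
  map_smul' := aux_phiAux_smul n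

lemma aux_phiAux_vanish (n : ℕ) :
    ∀ l : List Bool, l.length < n → phiAux n (monoOf l) = 0 := by
  induction n with
  | zero => exact fun l h => absurd h (Nat.not_lt_zero _)
  | succ m ih =>
    intro l h
    show sweedler (phiAux m) etaOp (monoOf l) = 0
    rw [aux_sweedler_monoOf]
    refine Finset.sum_eq_zero fun i hi => ?_
    have hi' : i < l.length := Finset.mem_range.mp hi
    rw [ih (l.take i) (by simp; omega)]
    simp

lemma aux_maxLen_monoOf (l : List Bool) : maxLen (monoOf l) = l.length := by
  unfold maxLen
  rw [aux_monoOf_single, Finsupp.support_single_ne_zero _ one_ne_zero,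
    Finset.sup_singleton, FreeMonoid.toList_ofList]

lemma aux_phiAux_vanish' (n : ℕ) (x : Alg) (h : maxLen x < n) : phiAux n x = 0 := by
  have hx : x = (toF x).sum MonoidAlgebra.single := (MonoidAlgebra.sum_coeff_single x).symm
  have : phiAux n x = phiAuxL n ((toF x).sum MonoidAlgebra.single) := by rw [← hx]; rfl
  rw [this, map_finsuppSum, Finsupp.sum]
  refine Finset.sum_eq_zero fun w hw => ?_
  have hlen : (FreeMonoid.toList w).length ≤ maxLen x :=
    Finset.le_sup (f := fun w => (FreeMonoid.toList w).length) hw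
  have hone : monoOf (FreeMonoid.toList w) = MonoidAlgebra.single w (1:ℤ) := by
    unfold monoOf
    rw [FreeMonoid.ofList_toList]
    rfl
  have hsingle : MonoidAlgebra.single w (toF x w) =
      (toF x w) • monoOf (FreeMonoid.toList w) := by
    rw [hone, MonoidAlgebra.smul_single', mul_one]
  show phiAuxL n (MonoidAlgebra.single w (toF x w)) = 0
  rw [hsingle, map_smul,
    show phiAuxL n (monoOf (FreeMonoid.toList w)) =
      phiAux n (monoOf (FreeMonoid.toList w)) from rfl,
    aux_phiAux_vanish n _ (lt_of_le_of_lt hlen h), smul_zero]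

lemma aux_phi_stable (x : Alg) (N : ℕ) (h : maxLen x < N) :
    phi x = ∑ k ∈ Finset.range N, phiAux k x := by
  unfold phi
  refine Finset.sum_subset (Finset.range_subset_range.mpr (by omega)) fun k hk hnk => ?_
  refine aux_phiAux_vanish' k x ?_
  simp only [Finset.mem_range] at hk hnk
  omega

lemma aux_phi_add (x y : Alg) : phi (x + y) = phi x + phi y := by
  set N := max (maxLen x) (max (maxLen y) (maxLen (x + y))) + 1 with hN
  rw [aux_phi_stable (x+y) N (by omega), aux_phi_stable x N (by omega),
    aux_phi_stable y N (by omega), ← Finset.sum_add_distrib]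
  exact Finset.sum_congr rfl fun k _ => aux_phiAux_add k x y

lemma aux_phi_smul (c : ℤ) (x : Alg) : phi (c • x) = c • phi x := by
  set N := max (maxLen x) (maxLen (c • x)) + 1 with hN
  rw [aux_phi_stable (c • x) N (by omega), aux_phi_stable x N (by omega),
    Finset.smul_sum]
  exact Finset.sum_congr rfl fun k _ => aux_phiAux_smul k c x

lemma aux_Gop_add (x y : Alg) : Gop (x + y) = Gop x + Gop y := by
  unfold Gop
  rw [aux_phi_add, aux_sweedler_add, add_mul, add_mul]
  abel

lemma aux_Gop_smul (c : ℤ) (x : Alg) : Gop (c • x) = c • Gop x := by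
  unfold Gop
  rw [aux_phi_smul, aux_sweedler_smul, smul_mul_assoc, smul_mul_assoc, smul_add]

/-- the key recursion for `φ_{k+1}` on `l·ab` -/
lemma aux_phiAux_succ (n : ℕ) (l : List Bool) :
    phiAux (n+1) (monoOf ((l ++ [false]) ++ [true])) =
      (2:ℤ) • (phiAux n (monoOf (l ++ [false])) * vb) +
      (2:ℤ) • (phiAux n (monoOf l) * vb * (va - vb)) := by
  show sweedler (phiAux n) etaOp (monoOf ((l ++ [false]) ++ [true])) = _
  rw [aux_sweedler_monoOf]
  have hlen : ((l ++ [false]) ++ [true]).length = l.length + 1 + 1 := by simp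
  rw [hlen, Finset.sum_range_succ, Finset.sum_range_succ]
  have h1 : ∑ i ∈ Finset.range l.length,
      phiAux n (monoOf (((l ++ [false]) ++ [true]).take i)) * vb *
        etaOp (monoOf (((l ++ [false]) ++ [true]).drop (i+1))) = 0 := by
    refine Finset.sum_eq_zero fun i hi => ?_
    have hi' : i < l.length := Finset.mem_range.mp hi
    have hd : ((l ++ [false]) ++ [true]).drop (i+1) =
        (l.drop (i+1)) ++ [false, true] := by
      rw [List.append_assoc]
      rw [List.drop_append_of_le_length (by omega)]
      rfl
    rw [hd, aux_etaOp_monoOf, aux_etaMon_bad, mul_zero]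
  rw [h1, zero_add]
  have ht1 : ((l ++ [false]) ++ [true]).take l.length = l := by
    rw [List.append_assoc, List.take_append_of_le_length (by omega),
      List.take_length]
  have hd1 : ((l ++ [false]) ++ [true]).drop (l.length + 1) = [true] := by
    rw [show l.length + 1 = (l ++ [false]).length by simp,
      List.drop_append_of_le_length (le_refl _), List.drop_length, List.nil_append]
  have ht2 : ((l ++ [false]) ++ [true]).take (l.length + 1) = l ++ [false] := by
    rw [show l.length + 1 = (l ++ [false]).length by simp,
      List.take_append_of_le_length (le_refl _), List.take_length]
  have hd2 : ((l ++ [false]) ++ [true]).drop (l.length + 1 + 1) = [] := by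
    rw [show l.length + 1 + 1 = ((l ++ [false]) ++ [true]).length by simp,
      List.drop_length]
  rw [ht1, hd1, ht2, hd2, aux_etaOp_monoOf, aux_etaOp_monoOf, aux_etaMon_nil,
    aux_etaMon_b]
  rw [mul_smul_comm, mul_smul_comm, mul_one]
  rw [add_comm]

lemma aux_sweedler_phi_lam (l : List Bool) :
    sweedler phi (fun y => lambdabar y) (monoOf (l ++ [false])) =
      phi (monoOf l) * vb := by
  rw [aux_sweedler_monoOf]
  have hlen : (l ++ [false]).length = l.length + 1 := by simp
  rw [hlen, Finset.sum_range_succ]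
  have h1 : ∑ i ∈ Finset.range l.length,
      phi (monoOf ((l ++ [false]).take i)) * vb *
        lambdabar (monoOf ((l ++ [false]).drop (i+1))) = 0 := by
    refine Finset.sum_eq_zero fun i hi => ?_
    have hi' : i < l.length := Finset.mem_range.mp hi
    rw [List.drop_append_of_le_length (by omega), aux_lambdabar_enda, mul_zero]
  rw [h1, zero_add, List.take_append_of_le_length (le_refl _), List.take_length,
    show (l ++ [false]).drop (l.length + 1) = [] by
      rw [show l.length + 1 = (l ++ [false]).length by simp, List.drop_length],
    aux_monoOf_nil, map_one, mul_one]

lemma aux_main_mono (l : List Bool) :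
    (2:ℤ) • Gop (monoOf l * va) = phi (monoOf l * (va * vb)) := by
  have h1 : monoOf l * va = monoOf (l ++ [false]) := by
    rw [aux_monoOf_append, aux_va_eq]
  have h2 : monoOf l * (va * vb) = monoOf ((l ++ [false]) ++ [true]) := by
    rw [aux_monoOf_append, aux_monoOf_append, ← aux_va_eq, ← aux_vb_eq, mul_assoc]
  rw [h1, h2]
  -- RHS computation
  have hphi : phi (monoOf ((l ++ [false]) ++ [true])) =
      ∑ k ∈ Finset.range (l.length + 3), phiAux k (monoOf ((l ++ [false]) ++ [true])) :=
    aux_phi_stable _ _ (by rw [aux_maxLen_monoOf]; simp)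
  rw [hphi, Finset.sum_range_succ']
  have h0 : phiAux 0 (monoOf ((l ++ [false]) ++ [true])) = 0 :=
    aux_kappa_endb _
  rw [h0, add_zero]
  have hrec : ∑ k ∈ Finset.range (l.length + 2),
      phiAux (k+1) (monoOf ((l ++ [false]) ++ [true])) =
      (2:ℤ) • ((∑ k ∈ Finset.range (l.length + 2), phiAux k (monoOf (l ++ [false]))) * vb) +
      (2:ℤ) • ((∑ k ∈ Finset.range (l.length + 2), phiAux k (monoOf l)) * vb * (va - vb)) := by
    rw [Finset.sum_congr rfl fun k _ => aux_phiAux_succ k l,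
      Finset.sum_add_distrib, ← Finset.smul_sum, ← Finset.smul_sum,
      ← Finset.sum_mul, ← Finset.sum_mul, ← Finset.sum_mul]
  rw [hrec,
    ← aux_phi_stable (monoOf (l ++ [false])) _ (by rw [aux_maxLen_monoOf]; simp),
    ← aux_phi_stable (monoOf l) _ (by rw [aux_maxLen_monoOf]; omega)]
  unfold Gop
  rw [aux_sweedler_phi_lam, smul_add]

end AuxG

end
/-- `G(w·a) = (1/2)·φ(w·ab)`, stated integrally as `2·G(w·a) = φ(w·ab)`. -/
theorem G_mul_a (w : Alg) : (2 : ℤ) • Gop (w * va) = phi (w * (va * vb)) := by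
  refine MonoidAlgebra.induction_on
    (motive := fun x => (2 : ℤ) • Gop (x * va) = phi (x * (va * vb))) w (fun g => ?_) (fun f g hf hg => ?_)
    (fun r f hf => ?_)
  · have hg : (MonoidAlgebra.of ℤ (FreeMonoid Bool)) g = monoOf (FreeMonoid.toList g) := by
      unfold monoOf
      rw [FreeMonoid.ofList_toList]
    rw [hg]
    exact aux_main_mono (FreeMonoid.toList g)
  · show (2 : ℤ) • Gop ((f + g) * va) = phi ((f + g) * (va * vb))
    rw [add_mul, add_mul, aux_Gop_add, aux_phi_add, smul_add, hf, hg]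
  · show (2 : ℤ) • Gop ((r • f) * va) = phi ((r • f) * (va * vb))
    rw [smul_mul_assoc, smul_mul_assoc, aux_Gop_smul, aux_phi_smul, ← hf,
      smul_comm]
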